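/- Let N ∪ {t} be a generalized (1,k)-configuration for the knapsack constraint aᵀx ≤ b, and let n' be an integer such that ∑_{i∈N} x_i ≤ n' holds for all x ∈ {0,1}ⁿ with aᵀx ≤ b. Then every x ∈ {0,1}ⁿ with aᵀx ≤ b satisfies (n' - k + 1)·x_t + ∑_{i∈N} x_i ≤ n'. -/

import Mathlib

open Finset

theorem generalized_config_inequality_valid {n : ℕ} (a : Fin n → ℤ) (ha : ∀ i, 0 ≤ a i)
    (b : ℤ) (hb : 0 ≤ b)
    (N : Finset (Fin n)) (t : Fin n) (ht : t ∉ N) (hNproper : N ≠ Finset.univ)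
    (k : ℕ) (hkN : k ≤ N.card)
    (hconfig : ∀ Q ⊆ N, Q.card = k → b < ∑ i ∈ insert t Q, a i)
    (n' : ℤ)
    (hvalid : ∀ y : Fin n → ℤ, (∀ i, y i = 0 ∨ y i = 1) → ∑ i, a i * y i ≤ b →
      ∑ i ∈ N, y i ≤ n')
    (x : Fin n → ℤ) (hx : ∀ i, x i = 0 ∨ x i = 1)
    (hfeas : ∑ i, a i * x i ≤ b) :
    (n' - k + 1) * x t + ∑ i ∈ N, x i ≤ n' := by
  rcases hx t with h0 | h1
  · have := hvalid x hx hfeas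
    rw [h0]; linarith
  · rw [h1, mul_one]
    -- show ∑ i ∈ N, x i ≤ k - 1
    set S := N.filter (fun i => x i = 1) with hS
    have hsum : ∑ i ∈ N, x i = S.card := by
      rw [hS, ← Finset.sum_filter_add_sum_filter_not N (fun i => x i = 1)]
      have h1' : ∑ i ∈ N.filter (fun i => x i = 1), x i
          = (N.filter (fun i => x i = 1)).card := by
        rw [Finset.card_eq_sum_ones, Nat.cast_sum]
        exact Finset.sum_congr rfl (fun i hi => by
          simp [(Finset.mem_filter.mp hi).2])
      have h2' : ∑ i ∈ N.filter (fun i => ¬ x i = 1), x i = 0 := by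
        refine Finset.sum_eq_zero (fun i hi => ?_)
        rcases hx i with h | h
        · exact h
        · exact absurd h (Finset.mem_filter.mp hi).2
      rw [h1', h2']; ring
    have hcard : (S.card : ℤ) ≤ (k : ℤ) - 1 := by
      by_contra hc
      push_neg at hc
      have hk : k ≤ S.card := by exact_mod_cast by omega
      obtain ⟨Q, hQS, hQcard⟩ := Finset.exists_subset_card_eq hk
      have hQN : Q ⊆ N := hQS.trans (Finset.filter_subset _ _)
      have hlt := hconfig Q hQN hQcard
      have htQ : t ∉ Q := fun h => ht (hQN h)
      have hle : ∑ i ∈ insert t Q, a i ≤ ∑ i, a i * x i := by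
        have : ∑ i ∈ insert t Q, a i = ∑ i ∈ insert t Q, a i * x i := by
          refine Finset.sum_congr rfl (fun i hi => ?_)
          rcases Finset.mem_insert.mp hi with h | h
          · rw [h, h1, mul_one]
          · rw [(Finset.mem_filter.mp (hQS h)).2, mul_one]
        rw [this]
        refine Finset.sum_le_sum_of_subset_of_nonneg (Finset.subset_univ _)
          (fun i _ _ => ?_)
        rcases hx i with h | h <;> simp [h, ha i]
      linarith
    have : ∑ i ∈ N, x i ≤ (k : ℤ) - 1 := by
      rw [hsum]; exact hcard
    linarith
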